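/- For any integers p ≥ 2, n ≥ 1, and d ≥ 1, the number N(p,n,d) of vectors x ∈ (Z/pZ)^n with Lee weight w_L(x) ≤ d satisfies N(p,n,d) ≤ C(2n + d - 1, d) + C(2n + d - 2, d - 1). -/

import Mathlib

/-- Lee weight of an element of `ZMod p`. -/
def leeWt (p : ℕ) (x : ZMod p) : ℕ := min x.val (p - x.val)

/-- Lee weight of a vector in `(ZMod p)^n`: sum of coordinate Lee weights. -/
def leeWtV (p n : ℕ) (x : Fin n → ZMod p) : ℕ := ∑ i, leeWt p (x i)

/-- Signed decomposition of a coordinate: positive and negative parts. -/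
def leeEnc (p : ℕ) (x : ZMod p) : ℕ × ℕ :=
  if x.val ≤ p - x.val then (leeWt p x, 0) else (0, leeWt p x)

lemma leeEnc_dec (p : ℕ) [NeZero p] (x : ZMod p) :
    ((leeEnc p x).1 : ZMod p) - ((leeEnc p x).2 : ZMod p) = x := by
  have hv : x.val < p := ZMod.val_lt x
  have hval : ((x.val : ℕ) : ZMod p) = x := ZMod.natCast_rightInverse x
  unfold leeEnc leeWt
  split_ifs with h
  · have : min x.val (p - x.val) = x.val := min_eq_left h
    simp [this, hval]
  · have hmin : min x.val (p - x.val) = p - x.val := min_eq_right (le_of_not_ge h)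
    have hle : x.val ≤ p := le_of_lt hv
    have : ((p - x.val : ℕ) : ZMod p) = (p : ZMod p) - (x.val : ZMod p) :=
      Nat.cast_sub hle
    simp [hmin, this, ZMod.natCast_self, hval]

lemma leeEnc_sum (p : ℕ) (x : ZMod p) : (leeEnc p x).1 + (leeEnc p x).2 = leeWt p x := by
  unfold leeEnc; split_ifs <;> simp

/-- the padded encoding of a vector as a function on `Fin n ⊕ Fin n`. -/
def bEnc (p n d : ℕ) (hn : 1 ≤ n) (x : Fin n → ZMod p) : Fin n ⊕ Fin n → ℕ :=
  let q := (d - leeWtV p n x) / 2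
  let i0 : Fin n := ⟨0, hn⟩
  Sum.elim (fun i => (leeEnc p (x i)).1 + if i = i0 then q else 0)
    (fun i => (leeEnc p (x i)).2 + if i = i0 then q else 0)

lemma bEnc_dec (p n d : ℕ) [NeZero p] (hn : 1 ≤ n) (x : Fin n → ZMod p) (i : Fin n) :
    ((bEnc p n d hn x (Sum.inl i) : ZMod p)) - (bEnc p n d hn x (Sum.inr i) : ZMod p) = x i := by
  have := leeEnc_dec p (x i)
  unfold bEnc
  simp only [Sum.elim_inl, Sum.elim_inr, Nat.cast_add]
  push_cast
  linear_combination this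

lemma bEnc_sum (p n d : ℕ) (hn : 1 ≤ n) (x : Fin n → ZMod p) :
    ∑ j : Fin n ⊕ Fin n, bEnc p n d hn x j
      = leeWtV p n x + 2 * ((d - leeWtV p n x) / 2) := by
  classical
  rw [Fintype.sum_sum_type]
  unfold bEnc
  simp only [Sum.elim_inl, Sum.elim_inr]
  rw [Finset.sum_add_distrib, Finset.sum_add_distrib]
  have h1 : ∑ i : Fin n, (if i = (⟨0, hn⟩ : Fin n) then (d - leeWtV p n x) / 2 else 0)
      = (d - leeWtV p n x) / 2 := by
    simp [Finset.sum_ite_eq']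
  have h2 : ∑ i : Fin n, ((leeEnc p (x i)).1 + (leeEnc p (x i)).2) = leeWtV p n x := by
    unfold leeWtV
    exact Finset.sum_congr rfl fun i _ => leeEnc_sum p (x i)
  have h2' : ∑ i : Fin n, (leeEnc p (x i)).1 + ∑ i : Fin n, (leeEnc p (x i)).2
      = leeWtV p n x := by rw [← Finset.sum_add_distrib]; exact h2
  omega

/-- the multiset associated to a function on a fintype. -/
def toMul {α : Type*} [Fintype α] [DecidableEq α] (b : α → ℕ) : Multiset α :=
  ∑ j, Multiset.replicate (b j) j

lemma count_toMul {α : Type*} [Fintype α] [DecidableEq α] (b : α → ℕ) (j : α) :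
    Multiset.count j (toMul b) = b j := by
  unfold toMul
  rw [Multiset.count_sum']
  simp [Multiset.count_replicate, Finset.sum_ite_eq]

lemma card_finsetSum {α β : Type*} (s : Finset β) (f : β → Multiset α) :
    Multiset.card (∑ j ∈ s, f j) = ∑ j ∈ s, Multiset.card (f j) := by
  induction s using Finset.cons_induction with
  | empty => simp
  | cons a s ha ih => simp [Finset.sum_cons, Multiset.card_add, ih]

lemma card_toMul {α : Type*} [Fintype α] [DecidableEq α] (b : α → ℕ) :
    Multiset.card (toMul b) = ∑ j, b j := by
  unfold toMul
  rw [card_finsetSum]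
  simp

theorem stmt6 (p n d : ℕ) (hp : 2 ≤ p) (hn : 1 ≤ n) (hd : 1 ≤ d) :
    Nat.card {x : Fin n → ZMod p // leeWtV p n x ≤ d} ≤
      (2 * n + d - 1).choose d + (2 * n + d - 2).choose (d - 1) := by
  classical
  haveI : NeZero p := ⟨by omega⟩
  set τ := (Fin n ⊕ Fin n)
  -- the injection
  have key : ∀ x : {x : Fin n → ZMod p // leeWtV p n x ≤ d},
      Multiset.card (toMul (bEnc p n d hn x.1)) = d - (d - leeWtV p n x.1) % 2 := by
    intro x
    rw [card_toMul, bEnc_sum]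
    have := x.2
    omega
  let F : {x : Fin n → ZMod p // leeWtV p n x ≤ d} → (Sym τ d ⊕ Sym τ (d - 1)) := fun x =>
    if h : (d - leeWtV p n x.1) % 2 = 0 then
      Sum.inl ⟨toMul (bEnc p n d hn x.1), by rw [key x, h]; omega⟩
    else
      Sum.inr ⟨toMul (bEnc p n d hn x.1), by rw [key x]; omega⟩
  have hFinj : Function.Injective F := by
    intro x y hxy
    have hmul : toMul (bEnc p n d hn x.1) = toMul (bEnc p n d hn y.1) := by
      dsimp only [F] at hxy
      split_ifs at hxy <;>
        (injection hxy with hxy'; exact congrArg Subtype.val hxy')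
    have hb : bEnc p n d hn x.1 = bEnc p n d hn y.1 := by
      funext j
      rw [← count_toMul (bEnc p n d hn x.1) j, ← count_toMul (bEnc p n d hn y.1) j, hmul]
    have hx : x.1 = y.1 := by
      funext i
      rw [← bEnc_dec p n d hn x.1 i, ← bEnc_dec p n d hn y.1 i, hb]
    exact Subtype.ext hx
  calc Nat.card {x : Fin n → ZMod p // leeWtV p n x ≤ d}
      ≤ Nat.card (Sym τ d ⊕ Sym τ (d - 1)) := Nat.card_le_card_of_injective F hFinj
    _ = (2 * n + d - 1).choose d + (2 * n + d - 2).choose (d - 1) := by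
        rw [Nat.card_eq_fintype_card, Fintype.card_sum, Sym.card_sym_eq_choose,
          Sym.card_sym_eq_choose]
        have hτ : Fintype.card τ = 2 * n := by simp [τ]; omega
        rw [hτ]
        congr 2 <;> omega
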